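/- Let F be a free group on s generators x₁,…,x_s, let H = ⟨x₁,…,x_s | r₁,…,r_t⟩ be a finitely presented quotient of F with quotient map π: F → H, and let L_H ≤ F × F be the subgroup generated by the pairs (xᵢ, xᵢ) for i = 1,…,s and (1, rⱼ) for j = 1,…,t. Then for any u ∈ F, the cyclic subgroup ⟨(u,1)⟩ of F × F is conjugate into L_H if and only if π(u) = 1 in H. -/

import Mathlib

/-- The conjugate subgroup `c⁻¹ H c`. -/
def conjBy {G : Type*} [Group G] (c : G) (H : Subgroup G) : Subgroup G :=
  H.map (MulAut.conj c⁻¹).toMonoidHom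

section Mihailova

variable {s t : ℕ} {H : Type*} [Group H]

/-- Mihailova's key lemma: `(u,v) ∈ L ↔ π u = π v`. -/
theorem mihailova_key (r : Fin t → FreeGroup (Fin s)) (π : FreeGroup (Fin s) →* H)
    (hker : π.ker = Subgroup.normalClosure (Set.range r))
    (L : Subgroup (FreeGroup (Fin s) × FreeGroup (Fin s)))
    (hL : L = Subgroup.closure
      ((Set.range fun i : Fin s =>
          ((FreeGroup.of i, FreeGroup.of i) : FreeGroup (Fin s) × FreeGroup (Fin s))) ∪
        (Set.range fun j : Fin t =>
          ((1, r j) : FreeGroup (Fin s) × FreeGroup (Fin s))))) :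
    ∀ u v : FreeGroup (Fin s), (u, v) ∈ L ↔ π u = π v := by
  have hr : ∀ j, π (r j) = 1 := by
    intro j
    have : r j ∈ π.ker := by
      rw [hker]
      exact Subgroup.subset_normalClosure ⟨j, rfl⟩
    simpa [MonoidHom.mem_ker] using this
  -- diagonal elements are in L
  have hdiag : ∀ w : FreeGroup (Fin s), ((w, w) : _ × _) ∈ L := by
    intro w
    induction w using FreeGroup.induction_on with
    | C1 => exact L.one_mem
    | of i =>
        rw [hL]
        exact Subgroup.subset_closure (Or.inl ⟨i, rfl⟩)
    | inv_of i h => simpa using L.inv_mem h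
    | mul a b ha hb => simpa using L.mul_mem ha hb
  have hrel : ∀ j, ((1, r j) : _ × _) ∈ L := by
    intro j
    rw [hL]
    exact Subgroup.subset_closure (Or.inr ⟨j, rfl⟩)
  -- the subgroup {w | (1,w) ∈ L} is normal and contains the relators
  set N : Subgroup (FreeGroup (Fin s)) :=
    L.comap (MonoidHom.inr (FreeGroup (Fin s)) (FreeGroup (Fin s))) with hN
  have hNnormal : N.Normal := by
    constructor
    intro n hn g
    have hmem : ((g, g) : _ × _) * (1, n) * ((g, g) : _ × _)⁻¹ ∈ L :=
      L.mul_mem (L.mul_mem (hdiag g) hn) (L.inv_mem (hdiag g))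
    have : (((g, g) : _ × _) * (1, n) * ((g, g) : _ × _)⁻¹) = (1, g * n * g⁻¹) := by
      simp [Prod.ext_iff, mul_assoc]
    rw [this] at hmem
    exact hmem
  have hkerN : π.ker ≤ N := by
    rw [hker]
    refine Subgroup.normalClosure_le_normal ?_
    rintro x ⟨j, rfl⟩
    exact hrel j
  intro u v
  constructor
  · -- forward: every element of L has equal projections
    intro hmem
    have hsub : L ≤ Subgroup.comap (π.prodMap π)
        (((MonoidHom.id H).prod (MonoidHom.id H)).range) := by
      rw [hL, Subgroup.closure_le]
      rintro x (⟨i, rfl⟩ | ⟨j, rfl⟩)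
      · exact ⟨π (FreeGroup.of i), rfl⟩
      · exact ⟨1, by simp [hr j, Prod.ext_iff]⟩
    have := hsub hmem
    obtain ⟨h, hh⟩ := this
    have h1 : h = π u := congrArg Prod.fst hh
    have h2 : h = π v := congrArg Prod.snd hh
    rw [← h1, ← h2]
  · intro huv
    have h1 : u⁻¹ * v ∈ π.ker := by
      simp [MonoidHom.mem_ker, huv]
    have h2 : ((1, u⁻¹ * v) : _ × _) ∈ L := hkerN h1
    have h3 : ((u, u) : _ × _) * (1, u⁻¹ * v) ∈ L := L.mul_mem (hdiag u) h2
    have : (((u, u) : _ × _) * (1, u⁻¹ * v)) = (u, v) := by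
      simp [Prod.ext_iff, ← mul_assoc]
    rwa [this] at h3

end Mihailova

/-- Mihailova construction: for `H = ⟨x₁,…,x_s | r₁,…,r_t⟩` with quotient map
`π : F → H` and `L_H ≤ F × F` generated by the `(xᵢ,xᵢ)` and `(1,rⱼ)`, the cyclic
subgroup `⟨(u,1)⟩` is conjugate into `L_H` iff `π u = 1`. -/
theorem stmt_14 {s t : ℕ} {H : Type*} [Group H]
    (r : Fin t → FreeGroup (Fin s)) (π : FreeGroup (Fin s) →* H)
    (hπ : Function.Surjective π)
    (hker : π.ker = Subgroup.normalClosure (Set.range r))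
    (L : Subgroup (FreeGroup (Fin s) × FreeGroup (Fin s)))
    (hL : L = Subgroup.closure
      ((Set.range fun i : Fin s =>
          ((FreeGroup.of i, FreeGroup.of i) : FreeGroup (Fin s) × FreeGroup (Fin s))) ∪
        (Set.range fun j : Fin t =>
          ((1, r j) : FreeGroup (Fin s) × FreeGroup (Fin s))))) :
    ∀ u : FreeGroup (Fin s),
      (∃ c : FreeGroup (Fin s) × FreeGroup (Fin s),
        conjBy c (Subgroup.zpowers ((u, 1) : FreeGroup (Fin s) × FreeGroup (Fin s))) ≤ L)
        ↔ π u = 1 := by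
  have key := mihailova_key r π hker L hL
  intro u
  constructor
  · rintro ⟨c, hc⟩
    have hmem : (MulAut.conj c⁻¹) ((u, 1) : _ × _) ∈ L :=
      hc ⟨(u, 1), Subgroup.mem_zpowers _, rfl⟩
    have heq : (MulAut.conj c⁻¹) ((u, 1) : _ × _) = (c.1⁻¹ * u * c.1, c.2⁻¹ * 1 * c.2) := by
      simp [MulAut.conj_apply, Prod.ext_iff, mul_assoc]
    rw [heq] at hmem
    have h2 : (π c.1)⁻¹ * π u * π c.1 = 1 := by
      simpa [map_mul, mul_assoc] using (key _ _).mp hmem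
    have h3 := congrArg (fun x => π c.1 * x * (π c.1)⁻¹) h2
    simpa [mul_assoc] using h3
  · intro hu
    refine ⟨1, ?_⟩
    rintro x ⟨y, hy, rfl⟩
    obtain ⟨k, rfl⟩ := hy
    have : ((u, 1) : _ × _) ∈ L := (key u 1).mpr (by simp [hu])
    simpa using L.zpow_mem this k
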